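/- Let v_1,…,v_n be XOS valuations on M, let X* = (X*_1,…,X*_n) be an allocation, and for each i let a_i be an additive representative of v_i at X*_i. Define prices p(j) = (1/2)·a_i({j}) for j ∈ X*_i and p(j) = 0 for items j not allocated by X*. Then for every buyer arrival order π and every sequential consumption outcome Y under prices p, Σ_i v_i(Y_i) ≥ (1/2)·Σ_i v_i(X*_i). -/

import Mathlib

open MeasureTheory Finset

/-- A monotone valuation normalized at the empty set. -/
def IsValuation {M : Type*} [Fintype M] [DecidableEq M] (v : Finset M → ℝ) : Prop :=
  v ∅ = 0 ∧ ∀ S T : Finset M, S ⊆ T → v S ≤ v T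

/-- An additive set function with nonnegative item values. -/
def IsAdditiveFn {M : Type*} [Fintype M] [DecidableEq M] (a : Finset M → ℝ) : Prop :=
  (∀ j : M, 0 ≤ a {j}) ∧ ∀ S : Finset M, a S = ∑ j ∈ S, a {j}

/-- An XOS valuation: the pointwise maximum of a finite nonempty family of
additive functions. -/
def IsXOS {M : Type*} [Fintype M] [DecidableEq M] (v : Finset M → ℝ) : Prop :=
  ∃ (k : ℕ) (a : Fin (k + 1) → Finset M → ℝ),
    (∀ i, IsAdditiveFn (a i)) ∧
      ∀ S : Finset M, IsGreatest (Set.range fun i => a i S) (v S)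

/-- `a` is an additive representative of the valuation `v` at the set `X`. -/
def IsAdditiveRep {M : Type*} [Fintype M] [DecidableEq M]
    (v a : Finset M → ℝ) (X : Finset M) : Prop :=
  IsAdditiveFn a ∧ (∀ S : Finset M, a S ≤ v S) ∧ a X = v X

/-- An allocation: pairwise disjoint bundles. -/
def IsAllocation {M : Type*} [Fintype M] [DecidableEq M] {n : ℕ}
    (X : Fin n → Finset M) : Prop :=
  ∀ i j : Fin n, i ≠ j → Disjoint (X i) (X j)

/-- Quasilinear utility of bundle `S` at item prices `p`. -/
def util {M : Type*} [Fintype M] [DecidableEq M]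
    (v : Finset M → ℝ) (p : M → ℝ) (S : Finset M) : ℝ :=
  v S - ∑ j ∈ S, p j

/-- Items still available to buyer `i` when buyers are processed in the
arrival order `π` (smaller `π`-value arrives earlier). -/
def availItems {M : Type*} [Fintype M] [DecidableEq M] {n : ℕ}
    (Y : Fin n → Finset M) (π : Equiv.Perm (Fin n)) (i : Fin n) : Finset M :=
  Finset.univ \ (Finset.univ.filter fun j => π j < π i).biUnion Y

/-- `Y` is a sequential consumption outcome at prices `p` and arrival order `π`:
each buyer receives a utility-maximizing bundle among the remaining items. -/
def IsSeqOutcome {M : Type*} [Fintype M] [DecidableEq M] {n : ℕ}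
    (v : Fin n → Finset M → ℝ) (p : M → ℝ)
    (π : Equiv.Perm (Fin n)) (Y : Fin n → Finset M) : Prop :=
  ∀ i : Fin n, Y i ⊆ availItems Y π i ∧
    ∀ S ⊆ availItems Y π i, util (v i) p S ≤ util (v i) p (Y i)

/-- `SW_j`: welfare contribution of item `j` under allocation `X` with additive
representatives `a` (equals `a i {j}` for the buyer `i` receiving `j`, and `0`
if `j` is unallocated). -/
def SWcontrib {M : Type*} [Fintype M] [DecidableEq M] {n : ℕ}
    (X : Fin n → Finset M) (a : Fin n → Finset M → ℝ) (j : M) : ℝ :=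
  ∑ i, if j ∈ X i then a i {j} else 0

/-- full-information version. If each buyer has an XOS
valuation, `X*` is an allocation with additive representatives `a_i`, and each
item `j ∈ X*_i` is priced at `(1/2)·a_i({j})` (unallocated items priced `0`),
then every sequential consumption outcome, for every arrival order, obtains at
least half the welfare of `X*`. -/
theorem full_information_half_welfare_XOS
    {M : Type*} [Fintype M] [DecidableEq M] {n : ℕ}
    (v : Fin n → Finset M → ℝ)
    (hv : ∀ i, IsValuation (v i) ∧ IsXOS (v i))
    (Xs : Fin n → Finset M) (hXs : IsAllocation Xs)
    (a : Fin n → Finset M → ℝ)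
    (ha : ∀ i, IsAdditiveRep (v i) (a i) (Xs i))
    (p : M → ℝ)
    (hpalloc : ∀ i : Fin n, ∀ j ∈ Xs i, p j = (1 / 2) * a i {j})
    (hpfree : ∀ j : M, (∀ i, j ∉ Xs i) → p j = 0)
    (π : Equiv.Perm (Fin n)) (Y : Fin n → Finset M)
    (hY : IsSeqOutcome v p π Y) :
    (1 / 2) * ∑ i, v i (Xs i) ≤ ∑ i, v i (Y i) := by
  
  classical
  set SOLD := Finset.univ.biUnion Y with hSOLD
  have hp0 : ∀ j, 0 ≤ p j := by
    intro j
    by_cases h : ∃ i, j ∈ Xs i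
    · obtain ⟨i, hi⟩ := h
      rw [hpalloc i j hi]
      have := (ha i).1.1 j
      linarith
    · push_neg at h
      rw [hpfree j h]
  have hYdisj : ((Finset.univ : Finset (Fin n)) : Set (Fin n)).PairwiseDisjoint Y := by
    intro i _ k _ hik
    have hne : π i ≠ π k := fun h => hik (π.injective h)
    rcases lt_or_gt_of_ne hne with h | h
    · refine Finset.disjoint_left.mpr fun j hji hjk => ?_
      have := (hY k).1 hjk
      simp only [availItems, Finset.mem_sdiff, Finset.mem_biUnion,
        Finset.mem_filter, Finset.mem_univ, true_and, not_exists, not_and] at this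
      exact this i h hji
    · refine Finset.disjoint_left.mpr fun j hji hjk => ?_
      have := (hY i).1 hji
      simp only [availItems, Finset.mem_sdiff, Finset.mem_biUnion,
        Finset.mem_filter, Finset.mem_univ, true_and, not_exists, not_and] at this
      exact this k h hjk
  have key : ∀ i, (1/2) * (∑ j ∈ Xs i \ SOLD, a i {j}) + ∑ j ∈ Y i, p j ≤ v i (Y i) := by
    intro i
    have hZsub : Xs i \ SOLD ⊆ availItems Y π i := by
      intro j hj
      have hjn : j ∉ SOLD := (Finset.mem_sdiff.mp hj).2
      simp only [hSOLD, Finset.mem_biUnion, Finset.mem_univ, true_and, not_exists] at hjn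
      simp only [availItems, Finset.mem_sdiff, Finset.mem_biUnion,
        Finset.mem_filter, Finset.mem_univ, true_and, not_exists, not_and]
      exact fun x _ => hjn x
    have h1 := (hY i).2 _ hZsub
    have hvz : a i (Xs i \ SOLD) ≤ v i (Xs i \ SOLD) := (ha i).2.1 _
    have hadd : a i (Xs i \ SOLD) = ∑ j ∈ Xs i \ SOLD, a i {j} := (ha i).1.2 _
    have hps : ∑ j ∈ Xs i \ SOLD, p j = ∑ j ∈ Xs i \ SOLD, (1/2) * a i {j} :=
      Finset.sum_congr rfl fun j hj => hpalloc i j (Finset.mem_sdiff.mp hj).1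
    have hZ : (1/2) * (∑ j ∈ Xs i \ SOLD, a i {j}) ≤ util (v i) p (Xs i \ SOLD) := by
      rw [util, hps, ← Finset.mul_sum]
      linarith
    have h2 := hZ.trans h1
    rw [util] at h2
    linarith
  have hsum : ∑ i, ((1/2) * (∑ j ∈ Xs i \ SOLD, a i {j}) + ∑ j ∈ Y i, p j)
      ≤ ∑ i, v i (Y i) := Finset.sum_le_sum fun i _ => key i
  -- revenue bound
  have hXdisj : ((Finset.univ : Finset (Fin n)) : Set (Fin n)).PairwiseDisjoint
      (fun i => Xs i ∩ SOLD) := by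
    intro i _ k _ hik
    exact (hXs i k hik).mono Finset.inter_subset_left Finset.inter_subset_left
  have hrev : ∑ i, (1/2) * (∑ j ∈ Xs i ∩ SOLD, a i {j}) ≤ ∑ i, ∑ j ∈ Y i, p j := by
    rw [← Finset.sum_biUnion hYdisj]
    have hsubT : (Finset.univ.biUnion fun i => Xs i ∩ SOLD) ⊆ SOLD := by
      intro j hj
      obtain ⟨i, _, hji⟩ := Finset.mem_biUnion.mp hj
      exact (Finset.mem_inter.mp hji).2
    calc ∑ i, (1/2) * (∑ j ∈ Xs i ∩ SOLD, a i {j})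
        = ∑ i, ∑ j ∈ Xs i ∩ SOLD, p j := by
          refine Finset.sum_congr rfl fun i _ => ?_
          rw [Finset.mul_sum]
          exact Finset.sum_congr rfl fun j hj =>
            (hpalloc i j (Finset.mem_inter.mp hj).1).symm
      _ = ∑ j ∈ Finset.univ.biUnion (fun i => Xs i ∩ SOLD), p j :=
          (Finset.sum_biUnion hXdisj).symm
      _ ≤ ∑ j ∈ SOLD, p j :=
          Finset.sum_le_sum_of_subset_of_nonneg hsubT (fun j _ _ => hp0 j)
  -- combine
  have hsplit : ∀ i, v i (Xs i)
      = (∑ j ∈ Xs i \ SOLD, a i {j}) + ∑ j ∈ Xs i ∩ SOLD, a i {j} := by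
    intro i
    have h1 : (∑ j ∈ Xs i \ (Xs i ∩ SOLD), a i {j}) + ∑ j ∈ Xs i ∩ SOLD, a i {j}
        = ∑ j ∈ Xs i, a i {j} := Finset.sum_sdiff Finset.inter_subset_left
    rw [Finset.sdiff_inter_self_left] at h1
    rw [← (ha i).2.2, (ha i).1.2, ← h1]
  calc (1/2) * ∑ i, v i (Xs i)
      = ∑ i, ((1/2) * (∑ j ∈ Xs i \ SOLD, a i {j})
          + (1/2) * (∑ j ∈ Xs i ∩ SOLD, a i {j})) := by
        rw [Finset.mul_sum]
        exact Finset.sum_congr rfl fun i _ => by rw [hsplit i]; ring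
    _ = (∑ i, (1/2) * (∑ j ∈ Xs i \ SOLD, a i {j}))
          + ∑ i, (1/2) * (∑ j ∈ Xs i ∩ SOLD, a i {j}) := Finset.sum_add_distrib
    _ ≤ (∑ i, (1/2) * (∑ j ∈ Xs i \ SOLD, a i {j})) + ∑ i, ∑ j ∈ Y i, p j := by
        linarith [hrev]
    _ = ∑ i, ((1/2) * (∑ j ∈ Xs i \ SOLD, a i {j}) + ∑ j ∈ Y i, p j) :=
        Finset.sum_add_distrib.symm
    _ ≤ ∑ i, v i (Y i) := hsum
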